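/- Let σ > 0 and τ > 0, let L be a real m×n matrix, and suppose Z is a real m×m matrix satisfying Z·Zᵀ = I_m − στ·L·Lᵀ. Define the real (n+m)×(n+m) block matrix C := [[ (1/√σ)·I_n, 0 ], [ −√σ·L, (1/√τ)·Z ]]. Then C·Cᵀ = M, where M is the block matrix [[ (1/σ)·I_n, −Lᵀ ], [ −L, (1/τ)·I_m ]]. -/

import Mathlib

open Matrix
/-- If `Z Zᵀ = I - στ L Lᵀ`, then the block matrix
`C = [[(1/√σ) I, 0], [-√σ L, (1/√τ) Z]]` factors the Chambolle–Pock preconditioner: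
`C Cᵀ = [[(1/σ) I, -Lᵀ], [-L, (1/τ) I]]`. -/
theorem stmt_18 (m n : ℕ) (σ τ : ℝ) (hσ : 0 < σ) (hτ : 0 < τ)
    (L : Matrix (Fin m) (Fin n) ℝ) (Z : Matrix (Fin m) (Fin m) ℝ)
    (hZ : Z * Zᵀ = 1 - (σ * τ) • (L * Lᵀ)) :
    Matrix.fromBlocks ((1 / Real.sqrt σ) • (1 : Matrix (Fin n) (Fin n) ℝ)) 0
        ((-Real.sqrt σ) • L) ((1 / Real.sqrt τ) • Z) *
      (Matrix.fromBlocks ((1 / Real.sqrt σ) • (1 : Matrix (Fin n) (Fin n) ℝ)) 0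
        ((-Real.sqrt σ) • L) ((1 / Real.sqrt τ) • Z))ᵀ
      = Matrix.fromBlocks ((1 / σ) • (1 : Matrix (Fin n) (Fin n) ℝ)) (-Lᵀ) (-L)
          ((1 / τ) • (1 : Matrix (Fin m) (Fin m) ℝ)) := by
  have hs : Real.sqrt σ ≠ 0 := ne_of_gt (Real.sqrt_pos.mpr hσ)
  have ht : Real.sqrt τ ≠ 0 := ne_of_gt (Real.sqrt_pos.mpr hτ)
  have hss : Real.sqrt σ * Real.sqrt σ = σ := Real.mul_self_sqrt hσ.le
  have htt : Real.sqrt τ * Real.sqrt τ = τ := Real.mul_self_sqrt hτ.le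
  rw [fromBlocks_transpose, fromBlocks_multiply]
  simp only [transpose_smul, transpose_one, transpose_zero, transpose_neg, smul_mul_smul_comm,
    Matrix.mul_one, Matrix.one_mul, Matrix.zero_mul, Matrix.mul_zero, add_zero, zero_add,
    smul_zero, hZ]
  have e1 : ((1 / √σ * (1 / √σ)) : ℝ) • (1 : Matrix (Fin n) (Fin n) ℝ) = (1 / σ) • 1 := by
    congr 1; field_simp; rw [sq, hss]
  have e2 : (1 / √σ) • (1 : Matrix (Fin n) (Fin n) ℝ) * -√σ • Lᵀ = -Lᵀ := by
    rw [Matrix.smul_mul, Matrix.mul_smul, Matrix.one_mul, smul_smul, mul_neg, one_div_mul_eq_div,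
      div_self hs, neg_one_smul]
  have e3 : -√σ • L * (1 / √σ) • (1 : Matrix (Fin n) (Fin n) ℝ) = -L := by
    rw [Matrix.smul_mul, Matrix.mul_smul, Matrix.mul_one, smul_smul, neg_mul, mul_one_div,
      div_self hs, neg_one_smul]
  have e4 : -√σ • L * -√σ • Lᵀ + ((1 / √τ * (1 / √τ)) : ℝ) • ((1 : Matrix (Fin m) (Fin m) ℝ) - (σ * τ) • (L * Lᵀ)) = (1 / τ) • 1 := by
    rw [Matrix.smul_mul, Matrix.mul_smul, smul_smul, neg_mul_neg, hss, smul_sub, smul_smul]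
    have h1 : (1 / √τ * (1 / √τ)) = 1 / τ := by field_simp; rw [sq, htt]
    have h2 : (1 / τ) * (σ * τ) = σ := by field_simp
    rw [h1, h2]
    abel
  rw [e1, e2, e3, e4]
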